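/- Bunkbed inequality for neighboring vertices with local symmetry: Let G = (V,E) be a finite complete graph with weights p_G ∈ [0,1)^E × [0,1]^V, and v, w ∈ V with p_{vw} > 0. Assume that either p_v = 1 or p_w = 1, or else for every u ∈ V with p_{uw} > 0 and p_u ≠ 1 there exists an automorphism φ of the weighted graph G with φ({v,w}) = {u,w}. Then P(v₋ ↔ w₋) ≥ P(v₋ ↔ w₊) for independent percolation on the bunkbed graph G±. -/

import Mathlib

open Finset

/-- The bunkbed graph of `G`: two copies of `G` (layers `false` = minus, `true` = plus)
plus vertical edges between the copies of each vertex. -/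
def bunkbed {V : Type*} (G : SimpleGraph V) : SimpleGraph (V × Bool) where
  Adj x y := (x.2 = y.2 ∧ G.Adj x.1 y.1) ∨ (x.1 = y.1 ∧ x.2 ≠ y.2)
  symm := ⟨by
    rintro ⟨u, s⟩ ⟨v, t⟩ (⟨h1, h2⟩ | ⟨h1, h2⟩)
    · exact Or.inl ⟨h1.symm, h2.symm⟩
    · exact Or.inr ⟨h1.symm, h2.symm⟩⟩
  loopless := ⟨by
    rintro ⟨u, s⟩ (⟨_, h⟩ | ⟨_, h⟩) <;> simp_all⟩

/-- The random subgraph of the bunkbed graph given by a percolation configuration `ω`. -/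
def openSub {V : Type*} (G : SimpleGraph V) (ω : Sym2 (V × Bool) → Bool) :
    SimpleGraph (V × Bool) where
  Adj x y := (bunkbed G).Adj x y ∧ ω s(x, y) = true
  symm := ⟨by
    intro x y h
    exact ⟨h.1.symm, by rw [Sym2.eq_swap]; exact h.2⟩⟩
  loopless := ⟨fun x h => (bunkbed G).irrefl h.1⟩

/-- `x` and `y` are connected by a path of open edges in configuration `ω`. -/
def Conn {V : Type*} (G : SimpleGraph V) (ω : Sym2 (V × Bool) → Bool) (x y : V × Bool) : Prop :=
  (openSub G ω).Reachable x y

/-- The probability weight of a configuration under independent bond percolation with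
edge probabilities `p`. -/
noncomputable def wt {V : Type*} [Fintype V] [DecidableEq V] (p : Sym2 (V × Bool) → ℝ)
    (ω : Sym2 (V × Bool) → Bool) : ℝ :=
  ∏ e : Sym2 (V × Bool), if ω e then p e else 1 - p e

open Classical in
/-- Probability of the event `A` under independent bond percolation with edge probabilities `p`. -/
noncomputable def prob {V : Type*} [Fintype V] [DecidableEq V] (p : Sym2 (V × Bool) → ℝ)
    (A : (Sym2 (V × Bool) → Bool) → Prop) : ℝ :=
  ∑ ω : Sym2 (V × Bool) → Bool, if A ω then wt p ω else 0

/-- Edge probabilities on the bunkbed graph built from horizontal weights `pE` (the same in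
both layers) and vertical weights `pV`. -/
noncomputable def edgeProb {V : Type*} [DecidableEq V] (pE : Sym2 V → ℝ) (pV : V → ℝ) :
    Sym2 (V × Bool) → ℝ :=
  Sym2.lift ⟨fun x y => if x.1 = y.1 then pV x.1 else if x.2 = y.2 then pE s(x.1, y.1) else 0, by
    intro x y
    beta_reduce
    by_cases h : x.1 = y.1
    · rw [if_pos h, if_pos h.symm, h]
    · have h' : y.1 ≠ x.1 := fun e => h e.symm
      rw [if_neg h, if_neg h']
      by_cases h2 : x.2 = y.2
      · rw [if_pos h2, if_pos h2.symm, Sym2.eq_swap]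
      · rw [if_neg h2, if_neg (fun e => h2 (Eq.symm e))]⟩

set_option linter.unusedSectionVars false
namespace BB
open SimpleGraph

variable {V : Type*} [Fintype V] [DecidableEq V]

abbrev Cfg (V : Type*) := Sym2 (V × Bool) → Bool

lemma edgeProb_mk (pE : Sym2 V → ℝ) (pV : V → ℝ) (x y : V × Bool) :
    edgeProb pE pV s(x, y) =
      if x.1 = y.1 then pV x.1 else if x.2 = y.2 then pE s(x.1, y.1) else 0 := by
  simp [edgeProb, Sym2.lift_mk]

lemma edgeProb_mem (pE : Sym2 V → ℝ) (pV : V → ℝ)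
    (hE : ∀ e, pE e ∈ Set.Ico (0:ℝ) 1) (hV : ∀ u, pV u ∈ Set.Icc (0:ℝ) 1)
    (e : Sym2 (V × Bool)) : 0 ≤ edgeProb pE pV e ∧ edgeProb pE pV e ≤ 1 := by
  induction e using Sym2.ind with
  | _ x y =>
    rw [edgeProb_mk]
    by_cases h1 : x.1 = y.1
    · rw [if_pos h1]; exact ⟨(hV x.1).1, (hV x.1).2⟩
    · by_cases h2 : x.2 = y.2
      · simp only [h1, h2, if_false, if_true, if_neg, if_pos]
        exact ⟨(hE s(x.1, y.1)).1, le_of_lt (hE s(x.1, y.1)).2⟩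
      · simp [h1, h2]

lemma wt_nonneg (p : Sym2 (V × Bool) → ℝ) (hp : ∀ e, 0 ≤ p e ∧ p e ≤ 1) (ω : Cfg V) :
    0 ≤ wt p ω := by
  refine Finset.prod_nonneg fun e _ => ?_
  by_cases h : ω e <;> simp [h, (hp e).1, sub_nonneg.2 (hp e).2]

lemma wt_open_of_one (p : Sym2 (V × Bool) → ℝ) (e : Sym2 (V × Bool)) (hpe : p e = 1)
    (ω : Cfg V) (h : wt p ω ≠ 0) : ω e = true := by
  by_contra hne
  apply h
  refine Finset.prod_eq_zero (Finset.mem_univ e) ?_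
  simp [hne, hpe]

/-- One-coordinate resampling lemma. -/
lemma OC (p : Sym2 (V × Bool) → ℝ) (e₀ : Sym2 (V × Bool)) (h h' : Cfg V → ℝ)
    (H : ∀ ω : Cfg V,
      p e₀ * (h (Function.update ω e₀ true) - h' (Function.update ω e₀ true)) +
      (1 - p e₀) * (h (Function.update ω e₀ false) - h' (Function.update ω e₀ false)) = 0) :
    ∑ ω : Cfg V, wt p ω * h ω = ∑ ω : Cfg V, wt p ω * h' ω := by
  classical
  rw [← sub_eq_zero, ← Finset.sum_sub_distrib]
  set g : Cfg V → ℝ := fun ω => h ω - h' ω with hg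
  have hsplit : ∀ ω : Cfg V, wt p ω * h ω - wt p ω * h' ω = wt p ω * g ω := by
    intro ω; simp [hg]; ring
  simp only [hsplit]
  -- wt splits off the e₀ coordinate
  set wr : Cfg V → ℝ := fun ω => ∏ e ∈ Finset.univ.erase e₀, (if ω e then p e else 1 - p e)
    with hwr
  have hwt : ∀ (ω : Cfg V) (b : Bool),
      wt p (Function.update ω e₀ b) = (if b then p e₀ else 1 - p e₀) * wr ω := by
    intro ω b
    rw [wt, ← Finset.mul_prod_erase Finset.univ _ (Finset.mem_univ e₀)]
    congr 1
    · simp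
    · refine Finset.prod_congr rfl fun e he => ?_
      rw [Function.update_of_ne (Finset.ne_of_mem_erase he)]
  -- involution flipping coordinate e₀
  have hinv : Function.Involutive
      (fun ω : Cfg V => Function.update ω e₀ (!(ω e₀))) := by
    intro ω; funext e
    by_cases he : e = e₀
    · subst he; simp
    · simp [Function.update_of_ne he]
  set π := hinv.toPerm _ with hπ
  have key : ∀ ω : Cfg V,
      wt p (Function.update ω e₀ true) * g (Function.update ω e₀ true) +
      wt p (Function.update ω e₀ false) * g (Function.update ω e₀ false) = 0 := by
    intro ω
    rw [hwt, hwt]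
    have := H ω
    simp only [if_true, Bool.false_eq_true, if_false]
    simp only [hg]
    linear_combination (wr ω) * this
  have pair : ∀ ω : Cfg V,
      wt p ω * g ω + wt p (π ω) * g (π ω) =
      wt p (Function.update ω e₀ true) * g (Function.update ω e₀ true) +
      wt p (Function.update ω e₀ false) * g (Function.update ω e₀ false) := by
    intro ω
    have hπω : π ω = Function.update ω e₀ (!(ω e₀)) := rfl
    cases hb : ω e₀
    · have h1 : Function.update ω e₀ false = ω := by
        rw [← hb]; exact Function.update_eq_self e₀ ω
      rw [hπω, hb]
      simp only [Bool.not_false]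
      first
        | (rw [h1]; ring)
        | rw [h1]
        | ring
    · have h1 : Function.update ω e₀ true = ω := by
        rw [← hb]; exact Function.update_eq_self e₀ ω
      rw [hπω, hb]
      simp only [Bool.not_true]
      first
        | (rw [h1]; ring)
        | rw [h1]
        | ring
  have h2 : (2:ℝ) * ∑ ω : Cfg V, wt p ω * g ω = 0 := by
    have := Equiv.sum_comp π (fun ω => wt p ω * g ω)
    calc (2:ℝ) * ∑ ω : Cfg V, wt p ω * g ω
        = ∑ ω : Cfg V, wt p ω * g ω + ∑ ω : Cfg V, wt p (π ω) * g (π ω) := by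
          rw [this]; ring
      _ = ∑ ω : Cfg V, (wt p ω * g ω + wt p (π ω) * g (π ω)) := by
          rw [Finset.sum_add_distrib]
      _ = ∑ ω : Cfg V, ((0:ℝ)) := by
          refine Finset.sum_congr rfl fun ω _ => ?_
          rw [pair ω, key ω]
      _ = 0 := by simp
  linarith

end BB
namespace BB
open SimpleGraph

variable {V : Type*} [Fintype V] [DecidableEq V]

/-- The subgraph of the open bunkbed graph avoiding both copies of `w`. -/
def avoidG (w : V) (ω : Cfg V) : SimpleGraph (V × Bool) where
  Adj x y := (openSub (⊤ : SimpleGraph V) ω).Adj x y ∧ x.1 ≠ w ∧ y.1 ≠ w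
  symm := ⟨by rintro x y ⟨h, hx, hy⟩; exact ⟨h.symm, hy, hx⟩⟩
  loopless := ⟨fun x h => (openSub _ ω).irrefl h.1⟩

/-- Reachability in the `w`-avoiding open subgraph. -/
def RA (w : V) (ω : Cfg V) (s x : V × Bool) : Prop := (avoidG w ω).Reachable s x

/-- The open subgraph with the avoid-cluster of `s` removed. -/
def mcG (w : V) (ω : Cfg V) (s : V × Bool) : SimpleGraph (V × Bool) where
  Adj x y := (openSub (⊤ : SimpleGraph V) ω).Adj x y ∧ ¬ RA w ω s x ∧ ¬ RA w ω s y
  symm := ⟨by rintro x y ⟨h, hx, hy⟩; exact ⟨h.symm, hy, hx⟩⟩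
  loopless := ⟨fun x h => (openSub _ ω).irrefl h.1⟩

open Classical in
noncomputable def GJ (w : V) (ω : Cfg V) (s : V × Bool) : ℝ :=
  if (mcG w ω s).Reachable (w, true) (w, false) then 0 else 1

open Classical in
noncomputable def XF (pE : Sym2 V → ℝ) (w : V) (ω : Cfg V) (s : V × Bool) : ℝ :=
  ∏ x ∈ Finset.univ.erase w, if RA w ω s (x, true) then 1 - pE s(x, w) else 1

open Classical in
noncomputable def YF (pE : Sym2 V → ℝ) (w : V) (ω : Cfg V) (s : V × Bool) : ℝ :=
  ∏ x ∈ Finset.univ.erase w, if RA w ω s (x, false) then 1 - pE s(x, w) else 1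

noncomputable def ZF (pE : Sym2 V → ℝ) (w : V) (ω : Cfg V) (s : V × Bool) : ℝ :=
  GJ w ω s * (XF pE w ω s - YF pE w ω s)

lemma walk_ne_w {w : V} {ω : Cfg V} :
    ∀ {s x : V × Bool}, (avoidG w ω).Walk s x → s.1 ≠ w → x.1 ≠ w := by
  intro s x W
  induction W with
  | nil => exact fun h => h
  | cons h _ ih => exact fun _ => ih h.2.2

lemma RA_ne_w {w : V} {ω : Cfg V} {s x : V × Bool} (hs : s.1 ≠ w) (h : RA w ω s x) :
    x.1 ≠ w :=
  h.elim fun W => walk_ne_w W hs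

lemma upd_eval {w : V} {ω : Cfg V} {e : Sym2 (V × Bool)} {b : Bool} {x y : V × Bool}
    (hx : x.1 ≠ w) (hy : y.1 ≠ w) (he : ∃ c, ((w, c) : V × Bool) ∈ e) :
    Function.update ω e b s(x, y) = ω s(x, y) := by
  obtain ⟨c, hc⟩ := he
  refine Function.update_of_ne ?_ _ _
  intro hEq
  rw [← hEq] at hc
  rcases Sym2.mem_iff.1 hc with h | h
  · exact hx (by rw [← h])
  · exact hy (by rw [← h])

lemma avoidG_update {w : V} {ω : Cfg V} {e : Sym2 (V × Bool)}
    (he : ∃ c, ((w, c) : V × Bool) ∈ e) (b : Bool) :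
    avoidG w (Function.update ω e b) = avoidG w ω := by
  ext x y
  constructor
  · rintro ⟨⟨hb, ho⟩, hx, hy⟩
    have hv := upd_eval (w := w) (ω := ω) (e := e) (b := b) hx hy he
    rw [hv] at ho
    exact ⟨⟨hb, ho⟩, hx, hy⟩
  · rintro ⟨⟨hb, ho⟩, hx, hy⟩
    have hv := upd_eval (w := w) (ω := ω) (e := e) (b := b) hx hy he
    rw [← hv] at ho
    exact ⟨⟨hb, ho⟩, hx, hy⟩

lemma RA_update {w : V} {ω : Cfg V} {e : Sym2 (V × Bool)}
    (he : ∃ c, ((w, c) : V × Bool) ∈ e) (b : Bool) (s x : V × Bool) :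
    RA w (Function.update ω e b) s x ↔ RA w ω s x := by
  rw [RA, RA, avoidG_update he b]

lemma mcG_update {w : V} {ω : Cfg V} {s : V × Bool} {u : V × Bool}
    (hu : RA w ω s u) (b : Bool) :
    mcG w (Function.update ω s(u, ((w, u.2) : V × Bool)) b) s = mcG w ω s := by
  have he : ∃ c, ((w, c) : V × Bool) ∈ s(u, ((w, u.2) : V × Bool)) :=
    ⟨u.2, Sym2.mem_iff.2 (Or.inr rfl)⟩
  have hval : ∀ x y : V × Bool, ¬ RA w ω s x → ¬ RA w ω s y →
      Function.update ω s(u, ((w, u.2) : V × Bool)) b s(x, y) = ω s(x, y) := by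
    intro x y hx hy
    refine Function.update_of_ne ?_ _ _
    intro hEq
    rcases Sym2.eq_iff.1 hEq with ⟨h1, _⟩ | ⟨_, h2⟩
    · exact hx (h1 ▸ hu)
    · exact hy (h2 ▸ hu)
  ext x y
  constructor
  · rintro ⟨⟨hb, ho⟩, hx, hy⟩
    rw [RA_update he b] at hx hy
    have hv := hval x y hx hy
    rw [hv] at ho
    exact ⟨⟨hb, ho⟩, hx, hy⟩
  · rintro ⟨⟨hb, ho⟩, hx, hy⟩
    have hv := hval x y hx hy
    rw [← hv] at ho
    refine ⟨⟨hb, ho⟩, ?_, ?_⟩ <;> rw [RA_update he b] <;> assumption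

/-- The event: some vertex of the `b`-layer part of the avoid-cluster of `(a,false)` has an
open edge to `(w,b)`. -/
def EV (w : V) (ω : Cfg V) (a : V) (b : Bool) : Prop :=
  ∃ u : V, RA w ω (a, false) (u, b) ∧ ω s(((u, b) : V × Bool), ((w, b) : V × Bool)) = true

/-- Decomposition target. -/
def Goal (w : V) (ω : Cfg V) (a : V) (b : Bool) : Prop :=
  EV w ω a b ∨ (EV w ω a (!b) ∧ (mcG w ω (a, false)).Reachable (w, !b) (w, b))

lemma dl_aux {w : V} {ω : Cfg V} {a : V} (ha : a ≠ w) :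
    ∀ n : ℕ, ∀ (b : Bool) (x : V × Bool)
      (W : (openSub (⊤ : SimpleGraph V) ω).Walk x ((w, b) : V × Bool)), W.length ≤ n →
      (RA w ω (a, false) x → Goal w ω a b) ∧
      (¬ RA w ω (a, false) x → (mcG w ω (a, false)).Reachable x (w, b) ∨ Goal w ω a b) := by
  intro n
  induction n with
  | zero =>
    intro b x W hlen
    cases W with
    | nil =>
      constructor
      · intro hRA
        exact absurd (RA_ne_w (by exact ha) hRA) (by simp)
      · intro _
        exact Or.inl (Reachable.refl _)
    | cons h W' => simp [SimpleGraph.Walk.length_cons] at hlen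
  | succ n ih =>
    intro b x W hlen
    cases W with
    | nil =>
      constructor
      · intro hRA
        exact absurd (RA_ne_w (by exact ha) hRA) (by simp)
      · intro _
        exact Or.inl (Reachable.refl _)
    | @cons _ y _ h W' =>
      have hlen' : W'.length ≤ n := by
        simp only [SimpleGraph.Walk.length_cons] at hlen
        omega
      constructor
      · -- x in the cluster
        intro hRA
        have hxw : x.1 ≠ w := RA_ne_w (by exact ha) hRA
        by_cases hyw : y.1 = w
        · -- next vertex is a copy of w
          have hxy2 : x.2 = y.2 := by
            rcases h.1 with ⟨h2, _⟩ | ⟨h1, _⟩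
            · exact h2
            · exact absurd (h1.trans hyw) hxw
          have hx' : x = (x.1, y.2) := by rw [← hxy2]
          have hy' : y = (w, y.2) := by
            cases y; cases hyw; rfl
          by_cases hyb : y.2 = b
          · -- reached (w,b) directly: EV b
            left
            refine ⟨x.1, ?_, ?_⟩
            · rw [← hyb, ← hx']; exact hRA
            · have := h.2
              rw [hx', hy', hyb] at this ⊢
              exact this
          · -- reached (w,!b)
            have hyb' : y.2 = !b := by
              cases b <;> cases hy2 : y.2 <;>
                simp only [Bool.not_false, Bool.not_true] <;>
                first
                  | exact hy2
                  | exact absurd hy2 hyb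
            have hEV : EV w ω a (!b) := by
              refine ⟨x.1, ?_, ?_⟩
              · rw [← hyb', ← hx']; exact hRA
              · have := h.2
                rw [hx', hy', hyb'] at this ⊢
                exact this
            have hy2 : y = ((w, !b) : V × Bool) := by rw [hy', hyb']
            have hnRA : ¬ RA w ω (a, false) y := fun hc => (RA_ne_w (by exact ha) hc) hyw
            rcases (ih b y W' hlen').2 hnRA with hJ | hG
            · rw [hy2] at hJ
              exact Or.inr ⟨hEV, hJ⟩
            · exact hG
        · -- y stays in the cluster
          have hstep : (avoidG w ω).Adj x y := ⟨h, hxw, hyw⟩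
          have hRAy : RA w ω (a, false) y := hRA.trans hstep.reachable
          exact (ih b y W' hlen').1 hRAy
      · -- x outside the cluster
        intro hnRA
        by_cases hy : RA w ω (a, false) y
        · exact Or.inr ((ih b y W' hlen').1 hy)
        · have hstep : (mcG w ω (a, false)).Adj x y := ⟨h, hnRA, hy⟩
          rcases (ih b y W' hlen').2 hy with hJ | hG
          · exact Or.inl (hstep.reachable.trans hJ)
          · exact Or.inr hG

lemma avoid_le {w : V} {ω : Cfg V} : avoidG w ω ≤ openSub (⊤ : SimpleGraph V) ω :=
  fun _ _ h => h.1

lemma mc_le {w : V} {ω : Cfg V} {s : V × Bool} :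
    mcG w ω s ≤ openSub (⊤ : SimpleGraph V) ω :=
  fun _ _ h => h.1

lemma conn_iff {w : V} {ω : Cfg V} {a : V} (ha : a ≠ w) (b : Bool) :
    Conn (⊤ : SimpleGraph V) ω (a, false) ((w, b) : V × Bool) ↔ Goal w ω a b := by
  constructor
  · rintro ⟨W⟩
    exact (dl_aux ha W.length b _ W le_rfl).1 (Reachable.refl _)
  · rintro (⟨u, hu, he⟩ | ⟨⟨u, hu, he⟩, hJ⟩)
    · have huw : u ≠ w := by
        have := RA_ne_w (x := ((u, b) : V × Bool)) (by exact ha) hu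
        exact this
      have hadj : (openSub (⊤ : SimpleGraph V) ω).Adj (u, b) ((w, b) : V × Bool) :=
        ⟨Or.inl ⟨rfl, (SimpleGraph.top_adj u w).2 huw⟩, he⟩
      exact (hu.mono avoid_le).trans hadj.reachable
    · have huw : u ≠ w := by
        have := RA_ne_w (x := ((u, !b) : V × Bool)) (by exact ha) hu
        exact this
      have hadj : (openSub (⊤ : SimpleGraph V) ω).Adj (u, !b) ((w, !b) : V × Bool) :=
        ⟨Or.inl ⟨rfl, (SimpleGraph.top_adj u w).2 huw⟩, he⟩
      exact ((hu.mono avoid_le).trans hadj.reachable).trans (hJ.mono mc_le)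

end BB
namespace BB
open SimpleGraph Finset

variable {V : Type*} [Fintype V] [DecidableEq V]

open Classical in
lemma ind_diff {w : V} {ω : Cfg V} {a : V} (ha : a ≠ w) :
    (if Conn (⊤ : SimpleGraph V) ω (a, false) ((w, false) : V × Bool) then (1:ℝ) else 0) -
    (if Conn (⊤ : SimpleGraph V) ω (a, false) ((w, true) : V × Bool) then (1:ℝ) else 0) =
    GJ w ω (a, false) * (if EV w ω a true then (0:ℝ) else 1) -
    GJ w ω (a, false) * (if EV w ω a false then (0:ℝ) else 1) := by
  rw [if_congr (conn_iff ha false) rfl rfl, if_congr (conn_iff ha true) rfl rfl]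
  have hsymm : (mcG w ω ((a, false) : V × Bool)).Reachable ((w, false) : V × Bool) (w, true) ↔
      (mcG w ω ((a, false) : V × Bool)).Reachable ((w, true) : V × Bool) (w, false) :=
    ⟨Reachable.symm, Reachable.symm⟩
  by_cases hJ : (mcG w ω ((a, false) : V × Bool)).Reachable ((w, true) : V × Bool) (w, false) <;>
  by_cases hA : EV w ω a false <;>
  by_cases hB : EV w ω a true <;>
    simp [Goal, GJ, hJ, hA, hB, hsymm, Bool.not_false, Bool.not_true]

open Classical in
lemma notEV_prod {w : V} {ω : Cfg V} {a : V} (ha : a ≠ w) (b : Bool) :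
    (if EV w ω a b then (0:ℝ) else 1) =
    ∏ u ∈ Finset.univ.erase w,
      (if RA w ω (a, false) ((u, b) : V × Bool) ∧
          ω s(((u, b) : V × Bool), ((w, b) : V × Bool)) = true then (0:ℝ) else 1) := by
  by_cases hEV : EV w ω a b
  · rw [if_pos hEV]
    obtain ⟨u, hu, he⟩ := hEV
    have huw : u ≠ w := RA_ne_w (x := ((u, b) : V × Bool)) (by exact ha) hu
    exact (Finset.prod_eq_zero (Finset.mem_erase.2 ⟨huw, Finset.mem_univ u⟩)
      (by rw [if_pos ⟨hu, he⟩])).symm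
  · rw [if_neg hEV]
    refine (Finset.prod_eq_one fun u hu => ?_).symm
    rw [if_neg]
    rintro ⟨h1, h2⟩
    exact hEV ⟨u, h1, h2⟩

open Classical in
lemma PINT (p : Sym2 (V × Bool) → ℝ) (ed : V → Sym2 (V × Bool))
    (P : Cfg V → V → Prop) (cc : V → ℝ) (s : Finset V)
    (hq : ∀ u ∈ s, cc u = 1 - p (ed u))
    (hinj : ∀ u ∈ s, ∀ u' ∈ s, ed u = ed u' → u = u')
    (hP : ∀ (ω : Cfg V) (u : V), u ∈ s → ∀ (b : Bool) (x : V),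
      P (Function.update ω (ed u) b) x ↔ P ω x)
    (G : Cfg V → ℝ)
    (hG : ∀ (ω : Cfg V) (u : V) (b : Bool), u ∈ s → P ω u →
      G (Function.update ω (ed u) b) = G ω) :
    ∑ ω : Cfg V, wt p ω * (G ω * ∏ u ∈ s, (if P ω u ∧ ω (ed u) = true then (0:ℝ) else 1))
    = ∑ ω : Cfg V, wt p ω * (G ω * ∏ u ∈ s, (if P ω u then cc u else 1)) := by
  induction s using Finset.induction generalizing G with
  | empty => simp
  | @insert u₀ s' hu₀ ih =>
    have hq' : ∀ u ∈ s', cc u = 1 - p (ed u) := fun u hu => hq u (mem_insert_of_mem hu)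
    have hinj' : ∀ u ∈ s', ∀ u' ∈ s', ed u = ed u' → u = u' :=
      fun u hu u' hu' => hinj u (mem_insert_of_mem hu) u' (mem_insert_of_mem hu')
    have hP' : ∀ (ω : Cfg V) (u : V), u ∈ s' → ∀ (b : Bool) (x : V),
        P (Function.update ω (ed u) b) x ↔ P ω x :=
      fun ω u hu => hP ω u (mem_insert_of_mem hu)
    have hprod : ∀ (ω : Cfg V) (b : Bool),
        (∏ u ∈ s', (if P (Function.update ω (ed u₀) b) u ∧
            (Function.update ω (ed u₀) b) (ed u) = true then (0:ℝ) else 1)) =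
        ∏ u ∈ s', (if P ω u ∧ ω (ed u) = true then (0:ℝ) else 1) := by
      intro ω b
      refine Finset.prod_congr rfl fun u hu => ?_
      have hne : ed u ≠ ed u₀ := by
        intro hEq
        have := hinj u (mem_insert_of_mem hu) u₀ (mem_insert_self _ _) hEq
        exact hu₀ (this ▸ hu)
      rw [Function.update_of_ne hne]
      exact if_congr (and_congr_left' (hP ω u₀ (mem_insert_self _ _) b u)) rfl rfl
    have step : ∑ ω : Cfg V, wt p ω *
          (G ω * ∏ u ∈ insert u₀ s', (if P ω u ∧ ω (ed u) = true then (0:ℝ) else 1))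
        = ∑ ω : Cfg V, wt p ω * ((G ω * (if P ω u₀ then cc u₀ else 1)) *
            ∏ u ∈ s', (if P ω u ∧ ω (ed u) = true then (0:ℝ) else 1)) := by
      apply OC p (ed u₀)
      intro ω
      have hPup : ∀ b : Bool, P (Function.update ω (ed u₀) b) u₀ ↔ P ω u₀ :=
        fun b => hP ω u₀ (mem_insert_self _ _) b u₀
      have hupd : ∀ b : Bool, (Function.update ω (ed u₀) b) (ed u₀) = b :=
        fun b => Function.update_self _ _ _
      by_cases hPu : P ω u₀
      · have hGT := hG ω u₀ true (mem_insert_self _ _) hPu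
        have hGF := hG ω u₀ false (mem_insert_self _ _) hPu
        have e1 : ∀ b : Bool,
            G (Function.update ω (ed u₀) b) *
              ∏ u ∈ insert u₀ s', (if P (Function.update ω (ed u₀) b) u ∧
                (Function.update ω (ed u₀) b) (ed u) = true then (0:ℝ) else 1)
            = G ω * ((if b then (0:ℝ) else 1) *
                ∏ u ∈ s', (if P ω u ∧ ω (ed u) = true then (0:ℝ) else 1)) := by
          intro b
          rw [Finset.prod_insert hu₀, hprod ω b, hupd b]
          cases b
          · rw [hGF]
            congr 1
            rw [if_neg (by rintro ⟨_, hc⟩; exact Bool.false_ne_true hc), if_neg (by simp)]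
          · rw [hGT]
            congr 1
            rw [if_pos ⟨(hPup true).2 hPu, rfl⟩, if_pos (by simp)]
        have e2 : ∀ b : Bool,
            G (Function.update ω (ed u₀) b) * (if P (Function.update ω (ed u₀) b) u₀ then cc u₀ else 1) *
              ∏ u ∈ s', (if P (Function.update ω (ed u₀) b) u ∧
                (Function.update ω (ed u₀) b) (ed u) = true then (0:ℝ) else 1)
            = G ω * (cc u₀ * ∏ u ∈ s', (if P ω u ∧ ω (ed u) = true then (0:ℝ) else 1)) := by
          intro b
          rw [hprod ω b, if_pos ((hPup b).2 hPu)]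
          cases b
          · rw [hGF]; ring
          · rw [hGT]; ring
        rw [e1 true, e1 false, e2 true, e2 false]
        have hcc := hq u₀ (mem_insert_self _ _)
        rw [hcc]
        simp only [if_true, Bool.false_eq_true, if_false]
        ring
      · have e3 : ∀ b : Bool,
            G (Function.update ω (ed u₀) b) *
              ∏ u ∈ insert u₀ s', (if P (Function.update ω (ed u₀) b) u ∧
                (Function.update ω (ed u₀) b) (ed u) = true then (0:ℝ) else 1)
            - G (Function.update ω (ed u₀) b) *
                (if P (Function.update ω (ed u₀) b) u₀ then cc u₀ else 1) *
              ∏ u ∈ s', (if P (Function.update ω (ed u₀) b) u ∧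
                (Function.update ω (ed u₀) b) (ed u) = true then (0:ℝ) else 1) = 0 := by
          intro b
          rw [Finset.prod_insert hu₀,
            if_neg (by rintro ⟨hc, _⟩; exact hPu ((hPup b).1 hc)),
            if_neg (by intro hc; exact hPu ((hPup b).1 hc))]
          ring
        rw [e3 true, e3 false]
        ring
    rw [step]
    have step2 := ih hq' hinj' hP'
      (fun ω => G ω * (if P ω u₀ then cc u₀ else 1))
      (by
        intro ω u b hu hPωu
        have h1 := hG ω u b (mem_insert_of_mem hu) hPωu
        have h2 : P (Function.update ω (ed u) b) u₀ ↔ P ω u₀ :=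
          hP ω u (mem_insert_of_mem hu) b u₀
        show G (Function.update ω (ed u) b) *
            (if P (Function.update ω (ed u) b) u₀ then cc u₀ else 1) =
          G ω * (if P ω u₀ then cc u₀ else 1)
        rw [h1, if_congr h2 rfl rfl])
    rw [step2]
    refine Finset.sum_congr rfl fun ω _ => ?_
    rw [Finset.prod_insert hu₀]
    ring

end BB
namespace BB
open SimpleGraph Finset

variable {V : Type*} [Fintype V] [DecidableEq V]

open Classical in
lemma L1 (pE : Sym2 V → ℝ) (pV : V → ℝ) {w a : V} (ha : a ≠ w) :
    prob (edgeProb pE pV) (fun ω => Conn (⊤ : SimpleGraph V) ω (a, false) (w, false)) -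
    prob (edgeProb pE pV) (fun ω => Conn (⊤ : SimpleGraph V) ω (a, false) (w, true)) =
    ∑ ω : Cfg V, wt (edgeProb pE pV) ω * ZF pE w ω (a, false) := by
  have h1 : prob (edgeProb pE pV) (fun ω => Conn (⊤ : SimpleGraph V) ω (a, false) (w, false)) -
      prob (edgeProb pE pV) (fun ω => Conn (⊤ : SimpleGraph V) ω (a, false) (w, true)) =
      (∑ ω : Cfg V, wt (edgeProb pE pV) ω *
          (GJ w ω (a, false) * (if EV w ω a true then (0:ℝ) else 1)))
        - ∑ ω : Cfg V, wt (edgeProb pE pV) ω *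
          (GJ w ω (a, false) * (if EV w ω a false then (0:ℝ) else 1)) := by
    rw [prob, prob, ← Finset.sum_sub_distrib, ← Finset.sum_sub_distrib]
    refine Finset.sum_congr rfl fun ω _ => ?_
    have hdi := ind_diff (w := w) (ω := ω) (a := a) ha
    have expand :
        (if Conn (⊤ : SimpleGraph V) ω (a, false) ((w, false) : V × Bool)
            then wt (edgeProb pE pV) ω else 0) -
        (if Conn (⊤ : SimpleGraph V) ω (a, false) ((w, true) : V × Bool)
            then wt (edgeProb pE pV) ω else 0) =
        wt (edgeProb pE pV) ω *
          ((if Conn (⊤ : SimpleGraph V) ω (a, false) ((w, false) : V × Bool) then (1:ℝ) else 0) -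
           (if Conn (⊤ : SimpleGraph V) ω (a, false) ((w, true) : V × Bool) then (1:ℝ) else 0)) := by
      by_cases hc1 : Conn (⊤ : SimpleGraph V) ω (a, false) ((w, false) : V × Bool) <;>
      by_cases hc2 : Conn (⊤ : SimpleGraph V) ω (a, false) ((w, true) : V × Bool) <;>
        simp [hc1, hc2]
    rw [expand, hdi]
    ring
  rw [h1]
  -- integrate out the upper w-edges
  have hB : (∑ ω : Cfg V, wt (edgeProb pE pV) ω *
        (GJ w ω (a, false) * (if EV w ω a true then (0:ℝ) else 1)))
      = ∑ ω : Cfg V, wt (edgeProb pE pV) ω * (GJ w ω (a, false) * XF pE w ω (a, false)) := by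
    have hrw : ∀ ω : Cfg V, wt (edgeProb pE pV) ω *
        (GJ w ω (a, false) * (if EV w ω a true then (0:ℝ) else 1)) =
        wt (edgeProb pE pV) ω * (GJ w ω (a, false) *
          ∏ u ∈ Finset.univ.erase w,
            (if RA w ω (a, false) ((u, true) : V × Bool) ∧
              ω s(((u, true) : V × Bool), ((w, true) : V × Bool)) = true then (0:ℝ) else 1)) := by
      intro ω
      rw [notEV_prod ha true]
    simp only [hrw]
    have := PINT (V := V) (edgeProb pE pV)
      (fun u => s(((u, true) : V × Bool), ((w, true) : V × Bool)))
      (fun ω u => RA w ω (a, false) ((u, true) : V × Bool))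
      (fun u => 1 - pE s(u, w))
      (Finset.univ.erase w)
      (by
        intro u hu
        have huw : u ≠ w := (Finset.mem_erase.1 hu).1
        rw [edgeProb_mk]
        simp [huw])
      (by
        intro u hu u' hu' hEq
        rcases Sym2.eq_iff.1 hEq with ⟨h1', _⟩ | ⟨h1', h2'⟩
        · exact (Prod.ext_iff.1 h1').1
        · exact absurd (Prod.ext_iff.1 h1').1 (Finset.mem_erase.1 hu).1)
      (by
        intro ω u hu b x
        exact RA_update ⟨true, Sym2.mem_iff.2 (Or.inr rfl)⟩ b _ _)
      (fun ω => GJ w ω (a, false))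
      (by
        intro ω u b hu hRAu
        show GJ w (Function.update ω s(((u, true) : V × Bool), ((w, true) : V × Bool)) b)
            (a, false) = GJ w ω (a, false)
        have := mcG_update (w := w) (ω := ω) (s := ((a, false) : V × Bool))
          (u := ((u, true) : V × Bool)) hRAu b
        rw [GJ, GJ, this])
    rw [this]
    rfl
  have hA : (∑ ω : Cfg V, wt (edgeProb pE pV) ω *
        (GJ w ω (a, false) * (if EV w ω a false then (0:ℝ) else 1)))
      = ∑ ω : Cfg V, wt (edgeProb pE pV) ω * (GJ w ω (a, false) * YF pE w ω (a, false)) := by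
    have hrw : ∀ ω : Cfg V, wt (edgeProb pE pV) ω *
        (GJ w ω (a, false) * (if EV w ω a false then (0:ℝ) else 1)) =
        wt (edgeProb pE pV) ω * (GJ w ω (a, false) *
          ∏ u ∈ Finset.univ.erase w,
            (if RA w ω (a, false) ((u, false) : V × Bool) ∧
              ω s(((u, false) : V × Bool), ((w, false) : V × Bool)) = true then (0:ℝ) else 1)) := by
      intro ω
      rw [notEV_prod ha false]
    simp only [hrw]
    have := PINT (V := V) (edgeProb pE pV)
      (fun u => s(((u, false) : V × Bool), ((w, false) : V × Bool)))
      (fun ω u => RA w ω (a, false) ((u, false) : V × Bool))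
      (fun u => 1 - pE s(u, w))
      (Finset.univ.erase w)
      (by
        intro u hu
        have huw : u ≠ w := (Finset.mem_erase.1 hu).1
        rw [edgeProb_mk]
        simp [huw])
      (by
        intro u hu u' hu' hEq
        rcases Sym2.eq_iff.1 hEq with ⟨h1', _⟩ | ⟨h1', h2'⟩
        · exact (Prod.ext_iff.1 h1').1
        · exact absurd (Prod.ext_iff.1 h1').1 (Finset.mem_erase.1 hu).1)
      (by
        intro ω u hu b x
        exact RA_update ⟨false, Sym2.mem_iff.2 (Or.inr rfl)⟩ b _ _)
      (fun ω => GJ w ω (a, false))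
      (by
        intro ω u b hu hRAu
        show GJ w (Function.update ω s(((u, false) : V × Bool), ((w, false) : V × Bool)) b)
            (a, false) = GJ w ω (a, false)
        have := mcG_update (w := w) (ω := ω) (s := ((a, false) : V × Bool))
          (u := ((u, false) : V × Bool)) hRAu b
        rw [GJ, GJ, this])
    rw [this]
    rfl
  rw [hB, hA, ← Finset.sum_sub_distrib]
  refine Finset.sum_congr rfl fun ω _ => ?_
  rw [ZF]
  ring

end BB
namespace BB
open SimpleGraph Finset

variable {V : Type*} [Fintype V] [DecidableEq V]

def boolNot : Bool ≃ Bool := ⟨not, not, Bool.not_not, Bool.not_not⟩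

def flipX (V : Type*) : (V × Bool) ≃ (V × Bool) := Equiv.prodCongr (Equiv.refl V) boolNot

def autX (φ : V ≃ V) : (V × Bool) ≃ (V × Bool) := Equiv.prodCongr φ (Equiv.refl Bool)

@[simp] lemma flipX_apply (x : V × Bool) : flipX V x = (x.1, !x.2) := rfl

@[simp] lemma autX_apply (φ : V ≃ V) (x : V × Bool) : autX φ x = (φ x.1, x.2) := rfl

def sym2E (ξ : (V × Bool) ≃ (V × Bool)) : Sym2 (V × Bool) ≃ Sym2 (V × Bool) where
  toFun := Sym2.map ξ
  invFun := Sym2.map ξ.symm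
  left_inv e := by
    induction e using Sym2.ind with
    | _ x y => simp
  right_inv e := by
    induction e using Sym2.ind with
    | _ x y => simp

def cfgE (ξ : (V × Bool) ≃ (V × Bool)) : Cfg V ≃ Cfg V where
  toFun ω := fun e => ω (Sym2.map ξ e)
  invFun ω := fun e => ω (Sym2.map ξ.symm e)
  left_inv ω := by
    funext e
    induction e using Sym2.ind with
    | _ x y => simp
  right_inv ω := by
    funext e
    induction e using Sym2.ind with
    | _ x y => simp

lemma cfgE_pair (ξ : (V × Bool) ≃ (V × Bool)) (ω : Cfg V) (x y : V × Bool) :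
    cfgE ξ ω s(x, y) = ω s(ξ x, ξ y) := by
  show ω (Sym2.map ξ s(x, y)) = ω s(ξ x, ξ y)
  rw [Sym2.map_pair_eq]

lemma wt_cfgE (p : Sym2 (V × Bool) → ℝ) (ξ : (V × Bool) ≃ (V × Bool))
    (hp : ∀ e, p (Sym2.map ξ e) = p e) (ω : Cfg V) :
    wt p (cfgE ξ ω) = wt p ω := by
  rw [wt, wt, ← Equiv.prod_comp (sym2E ξ) (fun e => if ω e = true then p e else 1 - p e)]
  refine Finset.prod_congr rfl fun e _ => ?_
  show (if ω (Sym2.map ξ e) = true then p e else 1 - p e) =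
    (if ω (Sym2.map ξ e) = true then p (Sym2.map ξ e) else 1 - p (Sym2.map ξ e))
  rw [hp e]

lemma reach_map {α : Type*} (f : α → α) (G1 G2 : SimpleGraph α)
    (h : ∀ x y, G1.Adj x y → G2.Adj (f x) (f y)) {x y : α} (hr : G1.Reachable x y) :
    G2.Reachable (f x) (f y) := hr.map ⟨f, fun {a b} hab => h a b hab⟩

lemma reach_congr {α : Type*} (ξ : α ≃ α) (G1 G2 : SimpleGraph α)
    (h : ∀ x y, G1.Adj x y ↔ G2.Adj (ξ x) (ξ y)) (x y : α) :
    G1.Reachable x y ↔ G2.Reachable (ξ x) (ξ y) := by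
  constructor
  · intro hr
    exact reach_map ξ G1 G2 (fun a b => (h a b).1) hr
  · intro hr
    have key := reach_map ξ.symm G2 G1 (fun a b hab => by
      have h2 := (h (ξ.symm a) (ξ.symm b)).2
      simp only [Equiv.apply_symm_apply] at h2
      exact h2 hab) hr
    simp only [Equiv.symm_apply_apply] at key
    exact key

lemma bunkbed_adj_iff (x y : V × Bool) :
    (bunkbed (⊤ : SimpleGraph V)).Adj x y ↔
      ((x.2 = y.2 ∧ x.1 ≠ y.1) ∨ (x.1 = y.1 ∧ x.2 ≠ y.2)) := by
  constructor
  · rintro (⟨h1, h2⟩ | ⟨h1, h2⟩)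
    · exact Or.inl ⟨h1, (SimpleGraph.top_adj _ _).1 h2⟩
    · exact Or.inr ⟨h1, h2⟩
  · rintro (⟨h1, h2⟩ | ⟨h1, h2⟩)
    · exact Or.inl ⟨h1, (SimpleGraph.top_adj _ _).2 h2⟩
    · exact Or.inr ⟨h1, h2⟩

lemma hadj_flip (x y : V × Bool) :
    (bunkbed (⊤ : SimpleGraph V)).Adj x y ↔
      (bunkbed (⊤ : SimpleGraph V)).Adj (flipX V x) (flipX V y) := by
  rw [bunkbed_adj_iff, bunkbed_adj_iff]
  simp only [flipX_apply]
  have hnn : ∀ a b : Bool, ((!a) = (!b)) ↔ a = b := fun a b => by cases a <;> cases b <;> simp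
  constructor
  · rintro (⟨h1, h2⟩ | ⟨h1, h2⟩)
    · exact Or.inl ⟨(hnn _ _).2 h1, h2⟩
    · exact Or.inr ⟨h1, fun hc => h2 ((hnn _ _).1 hc)⟩
  · rintro (⟨h1, h2⟩ | ⟨h1, h2⟩)
    · exact Or.inl ⟨(hnn _ _).1 h1, h2⟩
    · exact Or.inr ⟨h1, fun hc => h2 (by rw [hc])⟩

lemma hadj_aut (φ : V ≃ V) (x y : V × Bool) :
    (bunkbed (⊤ : SimpleGraph V)).Adj x y ↔
      (bunkbed (⊤ : SimpleGraph V)).Adj (autX φ x) (autX φ y) := by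
  rw [bunkbed_adj_iff, bunkbed_adj_iff]
  simp only [autX_apply]
  constructor
  · rintro (⟨h1, h2⟩ | ⟨h1, h2⟩)
    · exact Or.inl ⟨h1, fun hc => h2 (φ.injective hc)⟩
    · exact Or.inr ⟨by rw [h1], h2⟩
  · rintro (⟨h1, h2⟩ | ⟨h1, h2⟩)
    · exact Or.inl ⟨h1, fun hc => h2 (by rw [hc])⟩
    · exact Or.inr ⟨φ.injective h1, h2⟩

lemma hp_flip (pE : Sym2 V → ℝ) (pV : V → ℝ) (e : Sym2 (V × Bool)) :
    edgeProb pE pV (Sym2.map (flipX V) e) = edgeProb pE pV e := by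
  induction e using Sym2.ind with
  | _ x y =>
    rw [Sym2.map_pair_eq, edgeProb_mk, edgeProb_mk]
    simp only [flipX_apply]
    by_cases h1 : x.1 = y.1
    · simp [h1]
    · have hnn : ∀ a b : Bool, ((!a) = (!b)) ↔ a = b := fun a b => by cases a <;> cases b <;> simp
      by_cases h2 : x.2 = y.2
      · simp [h1, h2]
      · simp [h1, h2, hnn]

lemma hp_aut (pE : Sym2 V → ℝ) (pV : V → ℝ) (φ : V ≃ V)
    (hpE : ∀ x y : V, pE s(φ x, φ y) = pE s(x, y)) (hpV : ∀ x, pV (φ x) = pV x)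
    (e : Sym2 (V × Bool)) :
    edgeProb pE pV (Sym2.map (autX φ) e) = edgeProb pE pV e := by
  induction e using Sym2.ind with
  | _ x y =>
    rw [Sym2.map_pair_eq, edgeProb_mk, edgeProb_mk]
    simp only [autX_apply]
    by_cases h1 : x.1 = y.1
    · simp [h1, hpV]
    · have h1' : ¬ (φ x.1 = φ y.1) := fun hc => h1 (φ.injective hc)
      by_cases h2 : x.2 = y.2
      · simp [h1, h1', h2, hpE]
      · simp [h1, h1', h2]

lemma openSub_cfgE (ξ : (V × Bool) ≃ (V × Bool))
    (hadj : ∀ x y : V × Bool, (bunkbed (⊤ : SimpleGraph V)).Adj x y ↔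
      (bunkbed (⊤ : SimpleGraph V)).Adj (ξ x) (ξ y)) (ω : Cfg V) (x y : V × Bool) :
    (openSub (⊤ : SimpleGraph V) (cfgE ξ ω)).Adj x y ↔
      (openSub (⊤ : SimpleGraph V) ω).Adj (ξ x) (ξ y) := by
  show ((bunkbed (⊤ : SimpleGraph V)).Adj x y ∧ cfgE ξ ω s(x, y) = true) ↔
    ((bunkbed (⊤ : SimpleGraph V)).Adj (ξ x) (ξ y) ∧ ω s(ξ x, ξ y) = true)
  rw [cfgE_pair]
  exact and_congr (hadj x y) Iff.rfl

open Classical in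
lemma prob_conn_transport (p : Sym2 (V × Bool) → ℝ) (ξ : (V × Bool) ≃ (V × Bool))
    (hp : ∀ e, p (Sym2.map ξ e) = p e)
    (hadj : ∀ x y : V × Bool, (bunkbed (⊤ : SimpleGraph V)).Adj x y ↔
      (bunkbed (⊤ : SimpleGraph V)).Adj (ξ x) (ξ y))
    (x y : V × Bool) :
    prob p (fun ω => Conn (⊤ : SimpleGraph V) ω x y) =
      prob p (fun ω => Conn (⊤ : SimpleGraph V) ω (ξ x) (ξ y)) := by
  rw [prob, prob,
    ← Equiv.sum_comp (cfgE ξ) (fun ω => if Conn (⊤ : SimpleGraph V) ω x y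
      then wt p ω else 0)]
  refine Finset.sum_congr rfl fun ω _ => ?_
  show (if Conn (⊤ : SimpleGraph V) (cfgE ξ ω) x y then wt p (cfgE ξ ω) else 0) =
    (if Conn (⊤ : SimpleGraph V) ω (ξ x) (ξ y) then wt p ω else 0)
  have hiff : Conn (⊤ : SimpleGraph V) (cfgE ξ ω) x y ↔
      Conn (⊤ : SimpleGraph V) ω (ξ x) (ξ y) :=
    reach_congr ξ _ _ (openSub_cfgE ξ hadj ω) x y
  rw [if_congr hiff rfl rfl, wt_cfgE p ξ hp ω]

open Classical in
lemma prob_conn_symm (p : Sym2 (V × Bool) → ℝ) (x y : V × Bool) :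
    prob p (fun ω => Conn (⊤ : SimpleGraph V) ω x y) =
      prob p (fun ω => Conn (⊤ : SimpleGraph V) ω y x) := by
  rw [prob, prob]
  exact Finset.sum_congr rfl fun ω _ =>
    if_congr ⟨Reachable.symm, Reachable.symm⟩ rfl rfl

lemma RA_cfgE_flip (w : V) (ω : Cfg V) (s x : V × Bool) :
    RA w (cfgE (flipX V) ω) s x ↔ RA w ω (flipX V s) (flipX V x) := by
  refine reach_congr (flipX V) (avoidG w (cfgE (flipX V) ω)) (avoidG w ω) ?_ s x
  intro x y
  constructor
  · rintro ⟨ho, hx, hy⟩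
    exact ⟨(openSub_cfgE _ hadj_flip ω x y).1 ho, hx, hy⟩
  · rintro ⟨ho, hx, hy⟩
    exact ⟨(openSub_cfgE _ hadj_flip ω x y).2 ho, hx, hy⟩

lemma mc_cfgE_flip (w : V) (ω : Cfg V) (s : V × Bool) (x y : V × Bool) :
    (mcG w (cfgE (flipX V) ω) s).Adj x y ↔
      (mcG w ω (flipX V s)).Adj (flipX V x) (flipX V y) := by
  constructor
  · rintro ⟨ho, hx, hy⟩
    refine ⟨(openSub_cfgE _ hadj_flip ω x y).1 ho, ?_, ?_⟩
    · intro hc; exact hx ((RA_cfgE_flip w ω s x).2 hc)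
    · intro hc; exact hy ((RA_cfgE_flip w ω s y).2 hc)
  · rintro ⟨ho, hx, hy⟩
    refine ⟨(openSub_cfgE _ hadj_flip ω x y).2 ho, ?_, ?_⟩
    · intro hc; exact hx ((RA_cfgE_flip w ω s x).1 hc)
    · intro hc; exact hy ((RA_cfgE_flip w ω s y).1 hc)

open Classical in
lemma GJ_cfgE_flip (w : V) (ω : Cfg V) (a : V) :
    GJ w (cfgE (flipX V) ω) ((a, false) : V × Bool) = GJ w ω ((a, true) : V × Bool) := by
  rw [GJ, GJ]
  refine if_congr ?_ rfl rfl
  have h1 := reach_congr (flipX V) (mcG w (cfgE (flipX V) ω) ((a, false) : V × Bool))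
    (mcG w ω (flipX V ((a, false) : V × Bool))) (mc_cfgE_flip w ω ((a, false) : V × Bool))
    ((w, true) : V × Bool) ((w, false) : V × Bool)
  rw [h1]
  exact ⟨Reachable.symm, Reachable.symm⟩

open Classical in
lemma XF_cfgE_flip (pE : Sym2 V → ℝ) (w : V) (ω : Cfg V) (a : V) :
    XF pE w (cfgE (flipX V) ω) ((a, false) : V × Bool) = YF pE w ω ((a, true) : V × Bool) := by
  rw [XF, YF]
  refine Finset.prod_congr rfl fun x _ => ?_
  refine if_congr ?_ rfl rfl
  rw [RA_cfgE_flip]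
  exact Iff.rfl

open Classical in
lemma YF_cfgE_flip (pE : Sym2 V → ℝ) (w : V) (ω : Cfg V) (a : V) :
    YF pE w (cfgE (flipX V) ω) ((a, false) : V × Bool) = XF pE w ω ((a, true) : V × Bool) := by
  rw [YF, XF]
  refine Finset.prod_congr rfl fun x _ => ?_
  refine if_congr ?_ rfl rfl
  rw [RA_cfgE_flip]
  exact Iff.rfl

open Classical in
lemma ZF_flip (pE : Sym2 V → ℝ) (w : V) (ω : Cfg V) (a : V) :
    ZF pE w (cfgE (flipX V) ω) ((a, false) : V × Bool) = - ZF pE w ω ((a, true) : V × Bool) := by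
  rw [ZF, ZF, GJ_cfgE_flip, XF_cfgE_flip, YF_cfgE_flip]
  ring

open Classical in
lemma Dflip (pE : Sym2 V → ℝ) (pV : V → ℝ) (w a : V) :
    ∑ ω : Cfg V, wt (edgeProb pE pV) ω * ZF pE w ω ((a, false) : V × Bool)
    = - ∑ ω : Cfg V, wt (edgeProb pE pV) ω * ZF pE w ω ((a, true) : V × Bool) := by
  rw [← Equiv.sum_comp (cfgE (flipX V))
    (fun ω => wt (edgeProb pE pV) ω * ZF pE w ω ((a, false) : V × Bool)), ← Finset.sum_neg_distrib]
  refine Finset.sum_congr rfl fun ω _ => ?_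
  show wt (edgeProb pE pV) (cfgE (flipX V) ω) * ZF pE w (cfgE (flipX V) ω) ((a, false) : V × Bool)
    = -(wt (edgeProb pE pV) ω * ZF pE w ω ((a, true) : V × Bool))
  rw [wt_cfgE _ _ (hp_flip pE pV), ZF_flip]
  ring

end BB
namespace BB
open SimpleGraph Finset

variable {V : Type*} [Fintype V] [DecidableEq V]

lemma edgeProb_vert (pE : Sym2 V → ℝ) (pV : V → ℝ) (x : V) :
    edgeProb pE pV s(((x, false) : V × Bool), ((x, true) : V × Bool)) = pV x := by
  rw [edgeProb_mk]
  simp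

lemma RA_vert {w : V} {ω : Cfg V} {x : V} (hx : x ≠ w)
    (hvert : ω s(((x, false) : V × Bool), ((x, true) : V × Bool)) = true) (s : V × Bool) :
    RA w ω s ((x, true) : V × Bool) ↔ RA w ω s ((x, false) : V × Bool) := by
  have hadj : (avoidG w ω).Adj ((x, false) : V × Bool) ((x, true) : V × Bool) :=
    ⟨⟨Or.inr ⟨rfl, by simp⟩, hvert⟩, hx, hx⟩
  exact ⟨fun h => h.trans hadj.symm.reachable, fun h => h.trans hadj.reachable⟩

open Classical in
lemma ZF_congr (pE : Sym2 V → ℝ) (w : V) (ω : Cfg V) {s s' : V × Bool}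
    (h : ∀ x, RA w ω s x ↔ RA w ω s' x) :
    ZF pE w ω s = ZF pE w ω s' := by
  have hmc : mcG w ω s = mcG w ω s' := by
    ext x y
    exact and_congr Iff.rfl (and_congr (not_congr (h x)) (not_congr (h y)))
  have h1 : GJ w ω s = GJ w ω s' := by rw [GJ, GJ, hmc]
  have h2 : XF pE w ω s = XF pE w ω s' :=
    Finset.prod_congr rfl fun x _ => if_congr (h _) rfl rfl
  have h3 : YF pE w ω s = YF pE w ω s' :=
    Finset.prod_congr rfl fun x _ => if_congr (h _) rfl rfl
  rw [ZF, ZF, h1, h2, h3]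

lemma exp_ineq (s t : ℝ) : 0 ≤ (s - t) * (Real.exp (-t) - Real.exp (-s)) := by
  rcases le_total s t with h | h
  · have h2 : Real.exp (-t) ≤ Real.exp (-s) := Real.exp_le_exp.2 (by linarith)
    nlinarith
  · have h2 : Real.exp (-s) ≤ Real.exp (-t) := Real.exp_le_exp.2 (by linarith)
    nlinarith

open Classical in
/-- Pointwise nonnegativity of the log-weighted cluster sum. -/
lemma PW (pE : Sym2 V → ℝ) (pV : V → ℝ)
    (hE : ∀ e, pE e ∈ Set.Ico (0:ℝ) 1) (hV : ∀ u, pV u ∈ Set.Icc (0:ℝ) 1)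
    (w : V) (ω : Cfg V) (hω : wt (edgeProb pE pV) ω ≠ 0) :
    0 ≤ ∑ u ∈ Finset.univ.filter (fun u : V => u ≠ w ∧ 0 < pE s(u, w) ∧ pV u ≠ 1),
        (-Real.log (1 - pE s(u, w))) *
          (ZF pE w ω ((u, false) : V × Bool) - ZF pE w ω ((u, true) : V × Bool)) := by
  set S : Finset V := Finset.univ.filter (fun u : V => u ≠ w ∧ 0 < pE s(u, w) ∧ pV u ≠ 1)
    with hS
  set lam : V → ℝ := fun u => -Real.log (1 - pE s(u, w)) with hlam
  set μ : V × Bool → ℝ :=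
    fun pr => if pr.1 ∈ S then (if pr.2 then -(lam pr.1) else lam pr.1) else 0 with hμ
  have hrw : ∑ u ∈ S, lam u * (ZF pE w ω ((u, false) : V × Bool) -
        ZF pE w ω ((u, true) : V × Bool)) =
      ∑ pr : V × Bool, μ pr * ZF pE w ω pr := by
    rw [Fintype.sum_prod_type]
    have : ∀ x : V, (∑ b : Bool, μ (x, b) * ZF pE w ω (x, b)) =
        (if x ∈ S then lam x * (ZF pE w ω ((x, false) : V × Bool) -
          ZF pE w ω ((x, true) : V × Bool)) else 0) := by
      intro x
      rw [Fintype.sum_bool]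
      by_cases hx : x ∈ S
      · simp only [hμ, hx, if_true, Bool.false_eq_true, if_false]
        ring
      · simp only [hμ, hx, if_false]
        ring
    rw [Finset.sum_congr rfl fun x _ => this x, ← Finset.sum_filter, Finset.filter_univ_mem]
  rw [hrw]
  -- group by clusters
  set g : V × Bool → Finset (V × Bool) :=
    fun pr => Finset.univ.filter (fun x => RA w ω pr x) with hg
  rw [← Finset.sum_fiberwise_of_maps_to
    (g := g) (t := Finset.univ.image g)
    (fun pr _ => Finset.mem_image_of_mem g (Finset.mem_univ pr))
    (fun pr => μ pr * ZF pE w ω pr)]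
  refine Finset.sum_nonneg fun K hK => ?_
  obtain ⟨pr₀, _, hK0⟩ := Finset.mem_image.1 hK
  -- membership characterizations
  have hmemK : ∀ x : V × Bool, x ∈ K ↔ RA w ω pr₀ x := by
    intro x
    rw [← hK0, hg]
    simp
  have hfib : ∀ pr : V × Bool, g pr = K ↔ pr ∈ K := by
    intro pr
    constructor
    · intro h
      rw [← h, hg]
      simp only [Finset.mem_filter, Finset.mem_univ, true_and]
      exact Reachable.refl _
    · intro h
      rw [← hK0]
      apply Finset.ext
      intro x
      simp only [hg, Finset.mem_filter, Finset.mem_univ, true_and]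
      have hr : RA w ω pr₀ pr := (hmemK pr).1 h
      exact ⟨fun hx => hr.trans hx, fun hx => hr.symm.trans hx⟩
  have hZeq : ∀ pr : V × Bool, pr ∈ K → ZF pE w ω pr = ZF pE w ω pr₀ := by
    intro pr hpr
    refine ZF_congr pE w ω fun x => ?_
    have hr : RA w ω pr₀ pr := (hmemK pr).1 hpr
    exact ⟨fun hx => hr.trans hx, fun hx => hr.symm.trans hx⟩
  -- inner sum equals (∑ μ over K) * ZF pr₀
  have hinner : ∑ pr ∈ Finset.univ.filter (fun pr => g pr = K), μ pr * ZF pE w ω pr =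
      (∑ pr ∈ K, μ pr) * ZF pE w ω pr₀ := by
    have hfilter : Finset.univ.filter (fun pr => g pr = K) = K := by
      apply Finset.ext
      intro pr
      simp only [Finset.mem_filter, Finset.mem_univ, true_and]
      exact hfib pr
    rw [hfilter, Finset.sum_mul]
    exact Finset.sum_congr rfl fun pr hpr => by rw [hZeq pr hpr]
  rw [hinner]
  -- compute ∑ μ over K as LF - LT
  set LF : ℝ := ∑ x ∈ S.filter (fun x => ((x, false) : V × Bool) ∈ K), lam x with hLF
  set LT : ℝ := ∑ x ∈ S.filter (fun x => ((x, true) : V × Bool) ∈ K), lam x with hLT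
  have hμK : ∑ pr ∈ K, μ pr = LF - LT := by
    have h1 : ∑ pr ∈ K, μ pr = ∑ pr : V × Bool, if pr ∈ K then μ pr else 0 := by
      rw [Finset.sum_ite_mem, Finset.univ_inter]
    rw [h1, Fintype.sum_prod_type]
    have h2 : ∀ x : V, (∑ b : Bool, if ((x, b) : V × Bool) ∈ K then μ (x, b) else 0) =
        (if x ∈ S then ((if ((x, false) : V × Bool) ∈ K then lam x else 0) -
          (if ((x, true) : V × Bool) ∈ K then lam x else 0)) else 0) := by
      intro x
      rw [Fintype.sum_bool]
      by_cases hx : x ∈ S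
      · simp only [hμ, hx, if_true]
        by_cases hT : ((x, true) : V × Bool) ∈ K <;>
          by_cases hF : ((x, false) : V × Bool) ∈ K <;>
          simp [hT, hF]
      · simp [hμ, hx]
    have hFF : LF = ∑ x ∈ S, (if ((x, false) : V × Bool) ∈ K then lam x else 0) :=
      Finset.sum_filter _ _
    have hTT : LT = ∑ x ∈ S, (if ((x, true) : V × Bool) ∈ K then lam x else 0) :=
      Finset.sum_filter _ _
    rw [Finset.sum_congr rfl fun x _ => h2 x, ← Finset.sum_filter, Finset.filter_univ_mem,
      Finset.sum_sub_distrib, hFF, hTT]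
  rw [hμK]
  -- identify XF and YF with exponentials times a common rest factor
  have hccpos : ∀ x : V, 0 < 1 - pE s(x, w) := fun x => by
    have := (hE s(x, w)).2; linarith
  have hXK : XF pE w ω pr₀ = ∏ x ∈ Finset.univ.erase w,
      (if ((x, true) : V × Bool) ∈ K then 1 - pE s(x, w) else 1) :=
    Finset.prod_congr rfl fun x _ => if_congr ((hmemK _).symm) rfl rfl
  have hYK : YF pE w ω pr₀ = ∏ x ∈ Finset.univ.erase w,
      (if ((x, false) : V × Bool) ∈ K then 1 - pE s(x, w) else 1) :=
    Finset.prod_congr rfl fun x _ => if_congr ((hmemK _).symm) rfl rfl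
  have hSsub : (Finset.univ.erase w).filter (fun x => x ∈ S) = S := by
    apply Finset.ext
    intro x
    simp only [Finset.mem_filter, Finset.mem_erase, Finset.mem_univ, true_and, and_true]
    constructor
    · rintro ⟨_, hx⟩; exact hx
    · intro hx
      refine ⟨?_, hx⟩
      rw [hS] at hx
      exact (Finset.mem_filter.1 hx).2.1
  -- S part equals exponential
  have hXS : ∀ b : Bool, (∏ x ∈ S, (if ((x, b) : V × Bool) ∈ K then 1 - pE s(x, w) else 1)) =
      Real.exp (- ∑ x ∈ S.filter (fun x => ((x, b) : V × Bool) ∈ K), lam x) := by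
    intro b
    have : ∀ x ∈ S, (if ((x, b) : V × Bool) ∈ K then 1 - pE s(x, w) else 1) =
        Real.exp (if ((x, b) : V × Bool) ∈ K then -lam x else 0) := by
      intro x _
      by_cases hxb : ((x, b) : V × Bool) ∈ K
      · rw [if_pos hxb, if_pos hxb, hlam]
        simp only [neg_neg]
        rw [Real.exp_log (hccpos x)]
      · rw [if_neg hxb, if_neg hxb, Real.exp_zero]
    rw [Finset.prod_congr rfl this, ← Real.exp_sum]
    congr 1
    have e1 : (∑ x ∈ S.filter (fun x => ((x, b) : V × Bool) ∈ K), lam x)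
        = ∑ x ∈ S, (if ((x, b) : V × Bool) ∈ K then lam x else 0) := Finset.sum_filter _ _
    rw [e1, ← Finset.sum_neg_distrib]
    apply Finset.sum_congr rfl
    intro x _
    by_cases hxb : ((x, b) : V × Bool) ∈ K <;> simp [hxb]
  -- rest part: common and nonnegative
  set rest : Bool → ℝ := fun b => ∏ x ∈ (Finset.univ.erase w).filter (fun x => ¬ x ∈ S),
      (if ((x, b) : V × Bool) ∈ K then 1 - pE s(x, w) else 1) with hrest
  have hrest_nonneg : ∀ b, 0 ≤ rest b := by
    intro b
    refine Finset.prod_nonneg fun x _ => ?_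
    by_cases hxb : ((x, b) : V × Bool) ∈ K
    · rw [if_pos hxb]; exact le_of_lt (hccpos x)
    · rw [if_neg hxb]; norm_num
  have hrest_eq : rest true = rest false := by
    refine Finset.prod_congr rfl fun x hx => ?_
    obtain ⟨hxw, hxS⟩ := Finset.mem_filter.1 hx
    have hxw' : x ≠ w := (Finset.mem_erase.1 hxw).1
    rw [hS] at hxS
    simp only [Finset.mem_filter, Finset.mem_univ, true_and, not_and, not_not] at hxS
    by_cases hpe : 0 < pE s(x, w)
    · -- then pV x = 1, vertical edge is open
      have hpv : pV x = 1 := hxS hxw' hpe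
      have hvert : ω s(((x, false) : V × Bool), ((x, true) : V × Bool)) = true := by
        apply wt_open_of_one (edgeProb pE pV) _ _ _ hω
        rw [edgeProb_vert]
        exact hpv
      have hiff := RA_vert hxw' hvert pr₀
      have : (((x, true) : V × Bool) ∈ K) ↔ (((x, false) : V × Bool) ∈ K) := by
        rw [hmemK, hmemK]
        exact hiff
      by_cases hT : ((x, true) : V × Bool) ∈ K
      · rw [if_pos hT, if_pos (this.1 hT)]
      · rw [if_neg hT, if_neg (fun hc => hT (this.2 hc))]
    · -- then pE = 0 and the factor is 1 either way
      have : pE s(x, w) = 0 := le_antisymm (not_lt.1 hpe) (hE s(x, w)).1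
      rw [this]
      norm_num
  -- final inequality
  have hXF : XF pE w ω pr₀ = Real.exp (-LT) * rest true := by
    rw [hXK, ← Finset.prod_filter_mul_prod_filter_not (Finset.univ.erase w) (fun x => x ∈ S),
      hSsub, hXS true, hLT]
  have hYF : YF pE w ω pr₀ = Real.exp (-LF) * rest false := by
    rw [hYK, ← Finset.prod_filter_mul_prod_filter_not (Finset.univ.erase w) (fun x => x ∈ S),
      hSsub, hXS false, hLF]
  rw [ZF, hXF, hYF, hrest_eq]
  have hGJ : 0 ≤ GJ w ω pr₀ := by
    rw [GJ]
    by_cases hj : (mcG w ω pr₀).Reachable ((w, true) : V × Bool) ((w, false) : V × Bool) <;>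
      simp [hj]
  have key : 0 ≤ (LF - LT) * (Real.exp (-LT) - Real.exp (-LF)) := exp_ineq LF LT
  calc (0:ℝ) ≤ ((LF - LT) * (Real.exp (-LT) - Real.exp (-LF))) * (GJ w ω pr₀ * rest false) :=
        mul_nonneg key (mul_nonneg hGJ (hrest_nonneg false))
    _ = (LF - LT) * (GJ w ω pr₀ * (Real.exp (-LT) * rest false - Real.exp (-LF) * rest false)) := by
        ring

end BB
namespace BB
open SimpleGraph Finset

variable {V : Type*} [Fintype V] [DecidableEq V]

open Classical in
theorem main (pE : Sym2 V → ℝ) (pV : V → ℝ)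
    (hE : ∀ e, pE e ∈ Set.Ico (0:ℝ) 1) (hV : ∀ u, pV u ∈ Set.Icc (0:ℝ) 1)
    (v w : V) (hvw : v ≠ w) (hpos : 0 < pE s(v, w))
    (hsym : pV v = 1 ∨ pV w = 1 ∨
      ∀ u : V, u ≠ w → 0 < pE s(u, w) → pV u ≠ 1 →
        ∃ φ : V ≃ V, (∀ x y : V, pE s(φ x, φ y) = pE s(x, y)) ∧
          (∀ x : V, pV (φ x) = pV x) ∧ ({φ v, φ w} : Set V) = {u, w}) :
    prob (edgeProb pE pV) (fun ω => Conn (⊤ : SimpleGraph V) ω (v, false) (w, false)) ≥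
      prob (edgeProb pE pV) (fun ω => Conn (⊤ : SimpleGraph V) ω (v, false) (w, true)) := by
  have hprange : ∀ e, 0 ≤ edgeProb pE pV e ∧ edgeProb pE pV e ≤ 1 := edgeProb_mem pE pV hE hV
  rw [ge_iff_le, ← sub_nonneg]
  by_cases hw1 : pV w = 1
  · -- with the vertical edge at w almost surely open, the two events agree a.s.
    have heq : prob (edgeProb pE pV) (fun ω => Conn (⊤ : SimpleGraph V) ω (v, false) (w, false))
        = prob (edgeProb pE pV) (fun ω => Conn (⊤ : SimpleGraph V) ω (v, false) (w, true)) := by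
      rw [prob, prob]
      refine Finset.sum_congr rfl fun ω _ => ?_
      by_cases h0 : wt (edgeProb pE pV) ω = 0
      · rw [h0]; simp
      · have hvert : ω s(((w, false) : V × Bool), ((w, true) : V × Bool)) = true :=
          wt_open_of_one _ _ (by rw [edgeProb_vert]; exact hw1) ω h0
        have hadj : (openSub (⊤ : SimpleGraph V) ω).Adj ((w, false) : V × Bool) (w, true) :=
          ⟨Or.inr ⟨rfl, by simp⟩, hvert⟩
        exact if_congr ⟨fun h => h.trans hadj.reachable, fun h => h.trans hadj.symm.reachable⟩
          rfl rfl
    rw [heq, sub_self]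
  by_cases hv1 : pV v = 1
  · -- with the vertical edge at v open a.s., flip symmetry gives equality
    have h2 : prob (edgeProb pE pV) (fun ω => Conn (⊤ : SimpleGraph V) ω (v, false) (w, true))
        = prob (edgeProb pE pV)
            (fun ω => Conn (⊤ : SimpleGraph V) ω ((v, true) : V × Bool) ((w, false) : V × Bool)) :=
      prob_conn_transport (edgeProb pE pV) (flipX V) (hp_flip pE pV) hadj_flip _ _
    have h3 : prob (edgeProb pE pV)
          (fun ω => Conn (⊤ : SimpleGraph V) ω ((v, true) : V × Bool) ((w, false) : V × Bool))
        = prob (edgeProb pE pV)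
            (fun ω => Conn (⊤ : SimpleGraph V) ω (v, false) (w, false)) := by
      rw [prob, prob]
      refine Finset.sum_congr rfl fun ω _ => ?_
      by_cases h0 : wt (edgeProb pE pV) ω = 0
      · rw [h0]; simp
      · have hvert : ω s(((v, false) : V × Bool), ((v, true) : V × Bool)) = true :=
          wt_open_of_one _ _ (by rw [edgeProb_vert]; exact hv1) ω h0
        have hadj : (openSub (⊤ : SimpleGraph V) ω).Adj ((v, false) : V × Bool) (v, true) :=
          ⟨Or.inr ⟨rfl, by simp⟩, hvert⟩
        exact if_congr ⟨fun h => hadj.reachable.trans h, fun h => hadj.symm.reachable.trans h⟩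
          rfl rfl
    rw [h2, h3, sub_self]
  -- main case: local symmetry
  have hsym3 := (hsym.resolve_left hv1).resolve_left hw1
  set S : Finset V := Finset.univ.filter (fun u : V => u ≠ w ∧ 0 < pE s(u, w) ∧ pV u ≠ 1)
    with hSdef
  set lam : V → ℝ := fun u => -Real.log (1 - pE s(u, w)) with hlam
  have hvS : v ∈ S := Finset.mem_filter.2 ⟨Finset.mem_univ v, hvw, hpos, hv1⟩
  -- difference of the two probabilities for any source a ≠ w
  set Dv : ℝ := prob (edgeProb pE pV)
      (fun ω => Conn (⊤ : SimpleGraph V) ω (v, false) (w, false)) -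
    prob (edgeProb pE pV) (fun ω => Conn (⊤ : SimpleGraph V) ω (v, false) (w, true)) with hDv
  -- symmetry: the difference is the same for every u ∈ S
  have hDu : ∀ u ∈ S,
      prob (edgeProb pE pV) (fun ω => Conn (⊤ : SimpleGraph V) ω (u, false) (w, false)) -
      prob (edgeProb pE pV) (fun ω => Conn (⊤ : SimpleGraph V) ω (u, false) (w, true)) = Dv := by
    intro u hu
    obtain ⟨-, huw, hupos, hu1⟩ :
        u ∈ Finset.univ ∧ u ≠ w ∧ 0 < pE s(u, w) ∧ pV u ≠ 1 := by
      have := Finset.mem_filter.1 hu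
      exact ⟨this.1, this.2.1, this.2.2.1, this.2.2.2⟩
    obtain ⟨φ, hφE, hφV, hφset⟩ := hsym3 u huw hupos hu1
    have tr := prob_conn_transport (edgeProb pE pV) (autX φ)
      (hp_aut pE pV φ hφE hφV) (hadj_aut φ)
    have hv_mem : φ v = u ∨ φ v = w := by
      have : φ v ∈ ({u, w} : Set V) := by rw [← hφset]; exact Set.mem_insert _ _
      simpa using this
    have hw_mem : φ w = u ∨ φ w = w := by
      have : φ w ∈ ({u, w} : Set V) := by
        rw [← hφset]; exact Set.mem_insert_of_mem _ rfl
      simpa using this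
    rcases hv_mem with hA | hB
    · -- φ v = u, so φ w = w
      have hφw : φ w = w := by
        rcases hw_mem with h | h
        · exfalso; exact hvw (φ.injective (hA.trans h.symm))
        · exact h
      have eF := tr ((v, false) : V × Bool) ((w, false) : V × Bool)
      have eT := tr ((v, false) : V × Bool) ((w, true) : V × Bool)
      rw [show autX φ ((v, false) : V × Bool) = ((u, false) : V × Bool) by simp [hA],
        show autX φ ((w, false) : V × Bool) = ((w, false) : V × Bool) by simp [hφw]] at eF
      rw [show autX φ ((v, false) : V × Bool) = ((u, false) : V × Bool) by simp [hA],
        show autX φ ((w, true) : V × Bool) = ((w, true) : V × Bool) by simp [hφw]] at eT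
      rw [hDv, ← eF, ← eT]
    · -- φ v = w, so φ w = u
      have hφw : φ w = u := by
        rcases hw_mem with h | h
        · exact h
        · exfalso; exact hvw (φ.injective (hB.trans h.symm))
      have eF := tr ((v, false) : V × Bool) ((w, false) : V × Bool)
      have eT := tr ((v, false) : V × Bool) ((w, true) : V × Bool)
      rw [show autX φ ((v, false) : V × Bool) = ((w, false) : V × Bool) by simp [hB],
        show autX φ ((w, false) : V × Bool) = ((u, false) : V × Bool) by simp [hφw]] at eF
      rw [show autX φ ((v, false) : V × Bool) = ((w, false) : V × Bool) by simp [hB],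
        show autX φ ((w, true) : V × Bool) = ((u, true) : V × Bool) by simp [hφw]] at eT
      have sF := prob_conn_symm (edgeProb pE pV) ((w, false) : V × Bool) ((u, false) : V × Bool)
      have sT := prob_conn_symm (edgeProb pE pV) ((w, false) : V × Bool) ((u, true) : V × Bool)
      have fT := prob_conn_transport (edgeProb pE pV) (flipX V) (hp_flip pE pV) hadj_flip
        ((u, true) : V × Bool) ((w, false) : V × Bool)
      have fT' : prob (edgeProb pE pV)
          (fun ω => Conn (⊤ : SimpleGraph V) ω ((u, true) : V × Bool) ((w, false) : V × Bool)) =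
          prob (edgeProb pE pV)
          (fun ω => Conn (⊤ : SimpleGraph V) ω ((u, false) : V × Bool) ((w, true) : V × Bool)) := fT
      rw [hDv, ← sF, ← eF, ← fT', ← sT, ← eT]
  -- double the difference via the layer flip
  have h2D : ∀ a : V, a ≠ w →
      2 * (prob (edgeProb pE pV) (fun ω => Conn (⊤ : SimpleGraph V) ω (a, false) (w, false)) -
        prob (edgeProb pE pV) (fun ω => Conn (⊤ : SimpleGraph V) ω (a, false) (w, true)))
      = ∑ ω : Cfg V, wt (edgeProb pE pV) ω *
          (ZF pE w ω ((a, false) : V × Bool) - ZF pE w ω ((a, true) : V × Bool)) := by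
    intro a ha
    rw [L1 pE pV ha]
    have hflip := Dflip pE pV w a
    have h1 : 2 * (∑ ω : Cfg V, wt (edgeProb pE pV) ω * ZF pE w ω ((a, false) : V × Bool))
        = (∑ ω : Cfg V, wt (edgeProb pE pV) ω * ZF pE w ω ((a, false) : V × Bool)) -
          (∑ ω : Cfg V, wt (edgeProb pE pV) ω * ZF pE w ω ((a, true) : V × Bool)) := by
      linarith [hflip]
    rw [h1, ← Finset.sum_sub_distrib]
    exact Finset.sum_congr rfl fun ω _ => by ring
  -- positivity of the total weight
  have hposlam : ∀ u ∈ S, 0 < lam u := by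
    intro u hu
    have hm := Finset.mem_filter.1 hu
    have hupos : 0 < pE s(u, w) := hm.2.2.1
    have h1 : 1 - pE s(u, w) < 1 := by linarith
    have h0 : 0 < 1 - pE s(u, w) := by have := (hE s(u, w)).2; linarith
    have := Real.log_neg h0 h1
    rw [hlam]
    simp only []
    linarith
  have hlampos : 0 < ∑ u ∈ S, lam u := Finset.sum_pos hposlam ⟨v, hvS⟩
  -- the key inequality
  have hkey : 0 ≤ (∑ u ∈ S, lam u) * (2 * Dv) := by
    have hc1 : (∑ u ∈ S, lam u) * (2 * Dv) = ∑ u ∈ S, lam u * (2 * Dv) := Finset.sum_mul _ _ _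
    rw [hc1]
    have hc2 : ∀ u ∈ S, lam u * (2 * Dv) =
        lam u * ∑ ω : Cfg V, wt (edgeProb pE pV) ω *
          (ZF pE w ω ((u, false) : V × Bool) - ZF pE w ω ((u, true) : V × Bool)) := by
      intro u hu
      have huw : u ≠ w := (Finset.mem_filter.1 hu).2.1
      rw [← hDu u hu, h2D u huw]
    rw [Finset.sum_congr rfl hc2]
    have hc3 : ∑ u ∈ S, lam u * ∑ ω : Cfg V, wt (edgeProb pE pV) ω *
          (ZF pE w ω ((u, false) : V × Bool) - ZF pE w ω ((u, true) : V × Bool))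
        = ∑ ω : Cfg V, wt (edgeProb pE pV) ω * ∑ u ∈ S, lam u *
          (ZF pE w ω ((u, false) : V × Bool) - ZF pE w ω ((u, true) : V × Bool)) := by
      calc ∑ u ∈ S, lam u * ∑ ω : Cfg V, wt (edgeProb pE pV) ω *
            (ZF pE w ω ((u, false) : V × Bool) - ZF pE w ω ((u, true) : V × Bool))
          = ∑ u ∈ S, ∑ ω : Cfg V, lam u * (wt (edgeProb pE pV) ω *
            (ZF pE w ω ((u, false) : V × Bool) - ZF pE w ω ((u, true) : V × Bool))) :=
            Finset.sum_congr rfl fun u _ => Finset.mul_sum _ _ _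
        _ = ∑ ω : Cfg V, ∑ u ∈ S, lam u * (wt (edgeProb pE pV) ω *
            (ZF pE w ω ((u, false) : V × Bool) - ZF pE w ω ((u, true) : V × Bool))) :=
            Finset.sum_comm
        _ = ∑ ω : Cfg V, wt (edgeProb pE pV) ω * ∑ u ∈ S, lam u *
            (ZF pE w ω ((u, false) : V × Bool) - ZF pE w ω ((u, true) : V × Bool)) := by
            refine Finset.sum_congr rfl fun ω _ => ?_
            rw [Finset.mul_sum]
            exact Finset.sum_congr rfl fun u _ => by ring
    rw [hc3]
    refine Finset.sum_nonneg fun ω _ => ?_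
    by_cases h0 : wt (edgeProb pE pV) ω = 0
    · rw [h0, zero_mul]
    · exact mul_nonneg (wt_nonneg _ hprange ω) (PW pE pV hE hV w ω h0)
  -- conclude
  have hDvpos : 0 ≤ 2 * Dv := by
    by_contra hc
    push_neg at hc
    have := mul_neg_of_pos_of_neg hlampos hc
    linarith
  linarith

end BB
/-- Theorem 1: bunkbed inequality for neighboring vertices with a
local symmetry in a weighted complete graph. -/
theorem bunkbed_neighbors_local_symmetry {V : Type*} [Fintype V] [DecidableEq V]
    (pE : Sym2 V → ℝ) (pV : V → ℝ)
    (hE : ∀ e, pE e ∈ Set.Ico (0:ℝ) 1) (hV : ∀ u, pV u ∈ Set.Icc (0:ℝ) 1)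
    (v w : V) (hvw : v ≠ w) (hpos : 0 < pE s(v, w))
    (hsym : pV v = 1 ∨ pV w = 1 ∨
      ∀ u : V, u ≠ w → 0 < pE s(u, w) → pV u ≠ 1 →
        ∃ φ : V ≃ V, (∀ x y : V, pE s(φ x, φ y) = pE s(x, y)) ∧
          (∀ x : V, pV (φ x) = pV x) ∧ ({φ v, φ w} : Set V) = {u, w}) :
    prob (edgeProb pE pV) (fun ω => Conn (⊤ : SimpleGraph V) ω (v, false) (w, false)) ≥
      prob (edgeProb pE pV) (fun ω => Conn (⊤ : SimpleGraph V) ω (v, false) (w, true)) :=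
  BB.main pE pV hE hV v w hvw hpos hsym
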